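/- Let k ≠ 0 and let W denote the Lambert W function (the inverse of w ↦ w·e^w on [0,∞)). For t > 0 and k > 0, define u(t,x) = 2x/k − W((t²/k)·e^{2x/k}) and v(t,x) = −(k/t)·W((t²/k)·e^{2x/k}). Then (u,v) satisfies the nonlinear telegraph system v_t + k·e^u·u_x − e^u = 0 and u_t − v_x = 0. -/

import Mathlib

/-- Partial derivative in the first (time) variable. -/
noncomputable def pt (u : ℝ → ℝ → ℝ) : ℝ → ℝ → ℝ := fun t x => deriv (fun s => u s x) t

/-- Partial derivative in the second (space) variable. -/
noncomputable def px (u : ℝ → ℝ → ℝ) : ℝ → ℝ → ℝ := fun t x => deriv (fun y => u t y) x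

/-- with W the Lambert W function (inverse of w ↦ w·eʷ on [0,∞)),
    for t > 0, k > 0 the pair u(t,x) = 2x/k − W((t²/k)·e^{2x/k}),
    v(t,x) = −(k/t)·W((t²/k)·e^{2x/k}) satisfies the nonlinear telegraph system
    v_t + k·eᵘ·u_x − eᵘ = 0 and u_t − v_x = 0. -/
theorem stmt_6 (k : ℝ) (hk : k ≠ 0) (hkpos : 0 < k)
    (W : ℝ → ℝ)
    (hW0 : ∀ z : ℝ, 0 ≤ z → 0 ≤ W z ∧ W z * Real.exp (W z) = z)
    (hW' : ∀ z : ℝ, 0 < z → HasDerivAt W (W z / (z * (1 + W z))) z)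
    (u v : ℝ → ℝ → ℝ)
    (hu : ∀ t x : ℝ, 0 < t →
      u t x = 2 * x / k - W ((t ^ 2 / k) * Real.exp (2 * x / k)))
    (hv : ∀ t x : ℝ, 0 < t →
      v t x = -(k / t) * W ((t ^ 2 / k) * Real.exp (2 * x / k))) :
    ∀ t x : ℝ, 0 < t →
      pt v t x + k * Real.exp (u t x) * px u t x - Real.exp (u t x) = 0 ∧
      pt u t x - px v t x = 0 := by
  intro t x ht
  have htne : t ≠ 0 := ht.ne'
  set E := Real.exp (2 * x / k) with hE
  have hEpos : 0 < E := Real.exp_pos _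
  have hz : 0 < t ^ 2 / k * E := by positivity
  set z := t ^ 2 / k * E with hzdef
  obtain ⟨hw0, hwe⟩ := hW0 z hz.le
  set w := W z with hwdef
  have hwne : w ≠ 0 := by
    intro h
    rw [h, zero_mul] at hwe
    exact hz.ne' hwe.symm
  have hwpos : 0 < w := hw0.lt_of_ne' hwne
  have h1w : (0:ℝ) < 1 + w := by linarith
  have h1wne : (1:ℝ) + w ≠ 0 := h1w.ne'
  -- derivative of s ↦ s^2/k*E at t
  have hzt : HasDerivAt (fun s : ℝ => s ^ 2 / k * E) (2 * t / k * E) t := by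
    have := ((hasDerivAt_pow 2 t).div_const k).mul_const E
    simpa using this
  have hWt : HasDerivAt (fun s : ℝ => W (s ^ 2 / k * E))
      (w / (z * (1 + w)) * (2 * t / k * E)) t :=
    (hW' z hz).comp t hzt
  -- derivative of s ↦ -(k/s) at t
  have hinv : HasDerivAt (fun s : ℝ => -(k / s)) (k / t ^ 2) t := by
    have : HasDerivAt (fun y : ℝ => -(k * y⁻¹)) (-(k * -(t ^ 2)⁻¹)) t :=
      ((hasDerivAt_inv htne).const_mul k).neg
    simp only [div_eq_mul_inv]
    convert this using 1
    ring
  -- time derivative of v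
  have hvt : HasDerivAt (fun s : ℝ => -(k / s) * W (s ^ 2 / k * E))
      (k / t ^ 2 * w + -(k / t) * (w / (z * (1 + w)) * (2 * t / k * E))) t :=
    hinv.mul hWt
  have hptv : pt v t x = k / t ^ 2 * w + -(k / t) * (w / (z * (1 + w)) * (2 * t / k * E)) := by
    have heq : (fun s => v s x) =ᶠ[nhds t] (fun s : ℝ => -(k / s) * W (s ^ 2 / k * E)) := by
      filter_upwards [eventually_gt_nhds ht] with s hs
      exact hv s x hs
    rw [pt, heq.deriv_eq, hvt.deriv]
  -- time derivative of u
  have hut : HasDerivAt (fun s : ℝ => 2 * x / k - W (s ^ 2 / k * E))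
      (-(w / (z * (1 + w)) * (2 * t / k * E))) t := hWt.const_sub _
  have hptu : pt u t x = -(w / (z * (1 + w)) * (2 * t / k * E)) := by
    have heq : (fun s => u s x) =ᶠ[nhds t] (fun s : ℝ => 2 * x / k - W (s ^ 2 / k * E)) := by
      filter_upwards [eventually_gt_nhds ht] with s hs
      exact hu s x hs
    rw [pt, heq.deriv_eq, hut.deriv]
  -- derivative of y ↦ t^2/k * exp(2*y/k) at x
  have hzx : HasDerivAt (fun y : ℝ => t ^ 2 / k * Real.exp (2 * y / k))
      (t ^ 2 / k * (E * (2 / k))) x := by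
    have h1 : HasDerivAt (fun y : ℝ => 2 * y / k) (2 / k) x := by
      simpa using ((hasDerivAt_id x).const_mul 2).div_const k
    have := (h1.exp).const_mul (t ^ 2 / k)
    simpa [hE] using this
  have hWx : HasDerivAt (fun y : ℝ => W (t ^ 2 / k * Real.exp (2 * y / k)))
      (w / (z * (1 + w)) * (t ^ 2 / k * (E * (2 / k)))) x := by
    have := (hW' z hz).comp x hzx
    exact this
  -- space derivative of u
  have hux : HasDerivAt (fun y : ℝ => 2 * y / k - W (t ^ 2 / k * Real.exp (2 * y / k)))
      (2 / k - w / (z * (1 + w)) * (t ^ 2 / k * (E * (2 / k)))) x := by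
    have h1 : HasDerivAt (fun y : ℝ => 2 * y / k) (2 / k) x := by
      simpa using ((hasDerivAt_id x).const_mul 2).div_const k
    exact h1.sub hWx
  have hpxu : px u t x = 2 / k - w / (z * (1 + w)) * (t ^ 2 / k * (E * (2 / k))) := by
    have heq : (fun y => u t y) = (fun y : ℝ => 2 * y / k - W (t ^ 2 / k * Real.exp (2 * y / k))) :=
      funext fun y => hu t y ht
    rw [px, heq, hux.deriv]
  -- space derivative of v
  have hvx : HasDerivAt (fun y : ℝ => -(k / t) * W (t ^ 2 / k * Real.exp (2 * y / k)))
      (-(k / t) * (w / (z * (1 + w)) * (t ^ 2 / k * (E * (2 / k))))) x := hWx.const_mul _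
  have hpxv : px v t x = -(k / t) * (w / (z * (1 + w)) * (t ^ 2 / k * (E * (2 / k)))) := by
    have heq : (fun y => v t y) =
        (fun y : ℝ => -(k / t) * W (t ^ 2 / k * Real.exp (2 * y / k))) :=
      funext fun y => hv t y ht
    rw [px, heq, hvx.deriv]
  -- exp(u t x) = k * w / t^2
  have hexpw : Real.exp w = z / w := by
    rw [eq_div_iff hwne]
    linarith [hwe]
  have hexpu : Real.exp (u t x) = k * w / t ^ 2 := by
    rw [hu t x ht, Real.exp_sub, ← hE, ← hzdef, ← hwdef, hexpw, hzdef]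
    field_simp
  have hzne : z ≠ 0 := hz.ne'
  constructor
  · rw [hptv, hpxu, hexpu, hzdef]
    field_simp
    ring
  · rw [hptu, hpxv, hzdef]
    field_simp
    ring
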